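/- Let p(t,θ) := 1/(2π) + (1/π)·∑_{k=1}^∞ e^{-k² t}·cos(kθ). Then for every t > 0 and all real numbers x, y, y', one has |p(t, y − x) − p(t, y' − x)| ≤ (1/π)·(1 + 1/(2t))·e^{-t}·|y − y'|. -/

import Mathlib

open Real

/-- The heat kernel on the unit circle, given by its Fourier series representation
`p(t,θ) = 1/(2π) + (1/π)·∑_{k=1}^∞ e^{-k² t}·cos(kθ)`. -/
noncomputable def circleHeatKernel (t θ : ℝ) : ℝ :=
  1 / (2 * π) + (1 / π) * ∑' k : ℕ, Real.exp (-((k : ℝ) + 1) ^ 2 * t) * Real.cos (((k : ℝ) + 1) * θ)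

namespace CHKaux

/-- The exponent map used in the AM–GM rearrangement argument. -/
def phi (k j : ℕ) (b : Bool) : ℕ :=
  if b then (k + 1) ^ 2 + (2 * j + 1) else (k + 1) ^ 2 - (2 * j + 1)

lemma key_arith (k j k' j' A B A' B' S S' : ℕ)
    (hj : j ≤ k) (hj' : j' ≤ k')
    (eA : A = B + 2 * k + 1) (eA' : A' = B' + 2 * k' + 1)
    (eS : S = A + 2 * k + 3) (eS' : S' = A' + 2 * k' + 3)
    (hm1 : k < k' → A ≤ B') (hm2 : k' < k → A' ≤ B)
    (hm3 : k + 2 ≤ k' → S ≤ B') (hm4 : k' + 2 ≤ k → S' ≤ B)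
    (hx : k = k' + 1 → A = S') (hx' : k' = k + 1 → A' = S)
    (hq : k = k' → A = A')
    (b b' : Bool)
    (h : (if b then A + (2 * j + 1) else A - (2 * j + 1)) =
      (if b' then A' + (2 * j' + 1) else A' - (2 * j' + 1))) :
    k = k' ∧ j = j' ∧ b = b' := by
  cases b <;> cases b' <;> simp at h ⊢ <;>
  · rcases Nat.lt_trichotomy k k' with hc | hc | hc
    · have h1 := hm1 hc
      rcases Nat.lt_or_ge k' (k + 2) with hc2 | hc2
      · have h2 := hx' (by omega)
        omega
      · have h2 := hm3 hc2
        omega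
    · have h1 := hq hc
      omega
    · have h1 := hm2 hc
      rcases Nat.lt_or_ge k (k' + 2) with hc2 | hc2
      · have h2 := hx (by omega)
        omega
      · have h2 := hm4 hc2
        omega

lemma phi_inj_pts (k j k' j' : ℕ) (hj : j ≤ k) (hj' : j' ≤ k') (b b' : Bool)
    (h : phi k j b = phi k' j' b') : k = k' ∧ j = j' ∧ b = b' := by
  have eA : (k + 1) ^ 2 = k ^ 2 + 2 * k + 1 := by ring
  have eA' : (k' + 1) ^ 2 = k' ^ 2 + 2 * k' + 1 := by ring
  have eS : (k + 2) ^ 2 = (k + 1) ^ 2 + 2 * k + 3 := by ring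
  have eS' : (k' + 2) ^ 2 = (k' + 1) ^ 2 + 2 * k' + 3 := by ring
  have hm1 : k < k' → (k + 1) ^ 2 ≤ k' ^ 2 := fun hc => Nat.pow_le_pow_left hc 2
  have hm2 : k' < k → (k' + 1) ^ 2 ≤ k ^ 2 := fun hc => Nat.pow_le_pow_left hc 2
  have hm3 : k + 2 ≤ k' → (k + 2) ^ 2 ≤ k' ^ 2 := fun hc => Nat.pow_le_pow_left hc 2
  have hm4 : k' + 2 ≤ k → (k' + 2) ^ 2 ≤ k ^ 2 := fun hc => Nat.pow_le_pow_left hc 2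
  have hx : k = k' + 1 → (k + 1) ^ 2 = (k' + 2) ^ 2 := fun hc => by rw [hc]
  have hx' : k' = k + 1 → (k' + 1) ^ 2 = (k + 2) ^ 2 := fun hc => by rw [hc]
  have hq : k = k' → (k + 1) ^ 2 = (k' + 1) ^ 2 := fun hc => by rw [hc]
  exact key_arith k j k' j' ((k+1)^2) (k^2) ((k'+1)^2) (k'^2) ((k+2)^2) ((k'+2)^2)
    hj hj' eA eA' eS eS' hm1 hm2 hm3 hm4 hx hx' hq b b' h

/-- The index type for the rearrangement. -/
def Idx : Type := Σ k : ℕ, Fin (k + 1) × Bool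

def Phi : Idx → ℕ := fun x => phi x.1 x.2.1.1 x.2.2

lemma Phi_inj : Function.Injective Phi := by
  rintro ⟨k, j, b⟩ ⟨k', j', b'⟩ h
  obtain ⟨hk, hjj, hb⟩ := phi_inj_pts k j.1 k' j'.1 (Nat.lt_succ_iff.mp j.2)
    (Nat.lt_succ_iff.mp j'.2) b b' h
  subst hk
  have hj2 : j = j' := Fin.ext hjj
  subst hj2
  subst hb
  rfl

lemma two_le_amgm {q : ℝ} (hq0 : 0 < q) (E m : ℕ) (hm : m ≤ E) :
    2 * q ^ E ≤ q ^ (E - m) + q ^ (E + m) := by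
  have hmul : q ^ (E - m) * q ^ (E + m) = (q ^ E) ^ 2 := by
    rw [← pow_add, ← pow_mul]
    congr 1
    omega
  have h1 : (0:ℝ) < q ^ (E - m) := pow_pos hq0 _
  have h2 : (0:ℝ) < q ^ (E + m) := pow_pos hq0 _
  have h3 : (0:ℝ) < q ^ E := pow_pos hq0 _
  nlinarith [sq_nonneg (q ^ (E - m) - q ^ (E + m))]

/-- AM–GM rearrangement bound: `∑ (k+1) q^((k+1)²) ≤ 1/(2(1-q))`. -/
lemma tsum_sq_le {q : ℝ} (hq0 : 0 < q) (hq1 : q < 1) :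
    ∑' k : ℕ, ((k : ℝ) + 1) * q ^ ((k + 1) ^ 2) ≤ 1 / (2 * (1 - q)) := by
  have hgs : Summable (fun n : ℕ => (1 / 2 : ℝ) * q ^ n) :=
    (summable_geometric_of_lt_one hq0.le hq1).mul_left _
  set f : Idx → ℝ := fun x => (1 / 2 : ℝ) * q ^ (Phi x) with hf_def
  have hf : Summable f := hgs.comp_injective Phi_inj
  have fiber_eq : ∀ k : ℕ, ((k : ℝ) + 1) * q ^ ((k + 1) ^ 2) ≤
      ∑' p : Fin (k + 1) × Bool, f ⟨k, p⟩ := by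
    intro k
    rw [tsum_fintype, Fintype.sum_prod_type]
    have hinner : ∀ j : Fin (k + 1),
        q ^ ((k + 1) ^ 2) ≤ ∑ b : Bool, f ⟨k, (j, b)⟩ := by
      intro j
      have hb : ∑ b : Bool, f ⟨k, (j, b)⟩ =
          (1 / 2 : ℝ) * q ^ ((k + 1) ^ 2 - (2 * j.1 + 1)) +
          (1 / 2 : ℝ) * q ^ ((k + 1) ^ 2 + (2 * j.1 + 1)) := by
        simp [hf_def, Phi, phi, Fintype.sum_bool]
        ring
      rw [hb]
      have hm : 2 * j.1 + 1 ≤ (k + 1) ^ 2 := by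
        have h1 := Nat.lt_succ_iff.mp j.2
        have h2 : (k + 1) ^ 2 = k ^ 2 + 2 * k + 1 := by ring
        omega
      have := two_le_amgm hq0 ((k + 1) ^ 2) (2 * j.1 + 1) hm
      linarith
    calc ((k : ℝ) + 1) * q ^ ((k + 1) ^ 2)
        = ∑ _j : Fin (k + 1), q ^ ((k + 1) ^ 2) := by
          rw [Finset.sum_const, Finset.card_univ, Fintype.card_fin]
          push_cast
          ring
      _ ≤ ∑ j : Fin (k + 1), ∑ b : Bool, f ⟨k, (j, b)⟩ :=
          Finset.sum_le_sum fun j _ => hinner j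
  have hsum_fibers : Summable (fun k : ℕ => ∑' p : Fin (k + 1) × Bool, f ⟨k, p⟩) :=
    hf.sigma
  have hmain : Summable (fun k : ℕ => ((k : ℝ) + 1) * q ^ ((k + 1) ^ 2)) :=
    Summable.of_nonneg_of_le (fun k => by positivity) fiber_eq hsum_fibers
  calc ∑' k : ℕ, ((k : ℝ) + 1) * q ^ ((k + 1) ^ 2)
      ≤ ∑' k : ℕ, ∑' p : Fin (k + 1) × Bool, f ⟨k, p⟩ :=
        Summable.tsum_le_tsum fiber_eq hmain hsum_fibers
    _ = ∑' x : Idx, f x := (Summable.tsum_sigma' (fun k => Summable.of_finite) hf).symm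
    _ ≤ ∑' n : ℕ, (1 / 2 : ℝ) * q ^ n :=
        Summable.tsum_le_tsum_of_inj Phi Phi_inj
          (fun c _ => by positivity) (fun x => le_rfl) hf hgs
    _ = 1 / (2 * (1 - q)) := by
        rw [tsum_mul_left, tsum_geometric_of_lt_one hq0.le hq1, one_div, one_div, mul_inv]

/-- The coefficient sum. -/
noncomputable def T (t : ℝ) : ℝ :=
  ∑' k : ℕ, ((k : ℝ) + 1) * Real.exp (-((k : ℝ) + 1) ^ 2 * t)

lemma exp_sq_eq (t : ℝ) (k : ℕ) :
    Real.exp (-((k : ℝ) + 1) ^ 2 * t) = Real.exp (-t) ^ ((k + 1) ^ 2) := by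
  rw [← Real.exp_nat_mul]
  congr 1
  push_cast
  ring

lemma summable_aux {r : ℝ} (hr0 : 0 < r) (hr1 : r < 1) :
    Summable (fun k : ℕ => ((k : ℝ) + 1) * r ^ k) := by
  have h1 : Summable (fun k : ℕ => (k : ℝ) * r ^ k) := by
    simpa using summable_pow_mul_geometric_of_norm_lt_one 1
      (r := r) (by rw [Real.norm_eq_abs, abs_of_pos hr0]; exact hr1)
  simpa [add_mul] using h1.add (summable_geometric_of_lt_one hr0.le hr1)

lemma summable_T {t : ℝ} (ht : 0 < t) :
    Summable (fun k : ℕ => ((k : ℝ) + 1) * Real.exp (-((k : ℝ) + 1) ^ 2 * t)) := by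
  set q := Real.exp (-t) with hq
  have hq0 : 0 < q := Real.exp_pos _
  have hq1 : q < 1 := Real.exp_lt_one_iff.mpr (by linarith)
  have hbig : Summable (fun k : ℕ => ((k : ℝ) + 1) * q ^ (k + 1)) := by
    apply ((summable_aux hq0 hq1).mul_left q).congr
    intro k
    ring
  apply Summable.of_nonneg_of_le (fun k => by positivity) _ hbig
  intro k
  rw [exp_sq_eq]
  have hle : q ^ ((k + 1) ^ 2) ≤ q ^ (k + 1) :=
    pow_le_pow_of_le_one hq0.le hq1.le (by nlinarith)
  have hpos : (0:ℝ) ≤ (k : ℝ) + 1 := by positivity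
  exact mul_le_mul_of_nonneg_left hle hpos

lemma T_eq (t : ℝ) : T t = ∑' k : ℕ, ((k : ℝ) + 1) * Real.exp (-t) ^ ((k + 1) ^ 2) := by
  unfold T
  congr 1
  funext k
  rw [exp_sq_eq]

/-- Small time bound: for `0 < t ≤ 1/3`. -/
lemma T_le_small {t : ℝ} (ht : 0 < t) (ht3 : t ≤ 1 / 3) :
    T t ≤ (1 + 1 / (2 * t)) * Real.exp (-t) := by
  set q := Real.exp (-t) with hq
  have hq0 : 0 < q := Real.exp_pos _
  have hq1 : q < 1 := Real.exp_lt_one_iff.mpr (by linarith)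
  have h1 : T t ≤ 1 / (2 * (1 - q)) := by
    rw [T_eq]
    exact tsum_sq_le hq0 hq1
  refine h1.trans ?_
  have hql : 1 - t ≤ q := by
    have := Real.add_one_le_exp (-t)
    linarith
  have hqu : q ≤ 1 - t + t ^ 2 / 2 := by
    have hexp : 1 + t + t ^ 2 / 2 ≤ Real.exp t := by
      have h := Real.sum_le_exp_of_nonneg ht.le 3
      have heq : ∑ i ∈ Finset.range 3, t ^ i / (Nat.factorial i : ℝ) = 1 + t + t ^ 2 / 2 := by
        rw [Finset.sum_range_succ, Finset.sum_range_succ, Finset.sum_range_succ]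
        norm_num [Nat.factorial]
      rw [heq] at h
      linarith
    have hexpos : (0:ℝ) < Real.exp t := Real.exp_pos _
    have hkey : (1:ℝ) ≤ (1 - t + t ^ 2 / 2) * Real.exp t := by
      have hprod : (1 - t + t ^ 2 / 2) * (1 + t + t ^ 2 / 2) = 1 + t ^ 4 / 4 := by ring
      nlinarith
    have hqe : q * Real.exp t = 1 := by
      rw [hq, ← Real.exp_add]
      simp
    nlinarith
  have ht2 : (0:ℝ) < 2 * t := by linarith
  have h1q : (0:ℝ) < 1 - q := by linarith
  rw [div_le_iff₀ (by positivity)]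
  have hgoal : t ≤ q * (1 - q) * (2 * t + 1) := by
    have h13 : (0:ℝ) ≤ 1 / 3 - t := by linarith
    have hfac : (0:ℝ) ≤ 2 - 8 * t + 7 * t ^ 2 - 2 * t ^ 3 := by
      nlinarith [mul_nonneg (mul_nonneg h13 h13) h13, sq_nonneg (1 / 3 - t), h13]
    have hP : (1 - t + t ^ 2 / 2) * (1 - (1 - t + t ^ 2 / 2)) * (2 * t + 1) - t =
        t ^ 2 / 4 * (2 - 8 * t + 7 * t ^ 2 - 2 * t ^ 3) := by ring
    have h1' : (0:ℝ) ≤ (2 * t + 1) * ((q - (1 - t)) * ((1 - t + t ^ 2 / 2) - q)) :=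
      mul_nonneg (by linarith)
        (mul_nonneg (by linarith) (by linarith))
    have h2' : (0:ℝ) ≤ (2 * t + 1) * (((1 - t + t ^ 2 / 2) - q) *
        ((1 - t + t ^ 2 / 2) + (1 - t) - 1)) :=
      mul_nonneg (by linarith)
        (mul_nonneg (by linarith) (by nlinarith))
    have hfacq : (0:ℝ) ≤ t ^ 2 / 4 * (2 - 8 * t + 7 * t ^ 2 - 2 * t ^ 3) :=
      mul_nonneg (by positivity) hfac
    nlinarith [h1', h2', hfacq, hP]
  have hne : t ≠ 0 := ne_of_gt ht
  have hexpand : (1 + 1 / (2 * t)) * q * (2 * (1 - q)) - 1 =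
      (q * (1 - q) * (2 * t + 1) - t) / t := by
    field_simp
  nlinarith [div_nonneg (sub_nonneg.mpr hgoal) ht.le, hexpand]

/-- Large time bound: for `1/3 ≤ t`. -/
lemma T_le_large {t : ℝ} (ht : 0 < t) (ht3 : 1 / 3 ≤ t) :
    T t ≤ (1 + 1 / (2 * t)) * Real.exp (-t) := by
  set q := Real.exp (-t) with hq
  have hq0 : 0 < q := Real.exp_pos _
  have hq1 : q < 1 := Real.exp_lt_one_iff.mpr (by linarith)
  set r := q ^ 4 with hr
  have hr0 : 0 < r := by positivity
  -- r ≤ 0.27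
  have hrle : r ≤ 0.27 := by
    have h13 : Real.exp (4 / 3 : ℝ) = Real.exp 1 * Real.exp (1 / 3 : ℝ) := by
      rw [← Real.exp_add]; norm_num
    have h19 : Real.exp (1 / 3 : ℝ) = Real.exp (1 / 9 : ℝ) ^ 3 := by
      rw [← Real.exp_nat_mul]; norm_num
    have h9 : (10 / 9 : ℝ) ≤ Real.exp (1 / 9 : ℝ) := by
      have := Real.add_one_le_exp (1 / 9 : ℝ)
      linarith
    have he1 : (2.7182818 : ℝ) ≤ Real.exp 1 :=
      le_trans (by norm_num) Real.exp_one_gt_d9.le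
    have h43 : (3.71 : ℝ) ≤ Real.exp (4 / 3 : ℝ) := by
      rw [h13, h19]
      have h3 : (10 / 9 : ℝ) ^ 3 ≤ Real.exp (1 / 9 : ℝ) ^ 3 :=
        pow_le_pow_left₀ (by norm_num) h9 3
      nlinarith [Real.exp_pos (1 / 9 : ℝ)]
    have hqr : r = Real.exp (-(4 * t)) := by
      rw [hr, hq, ← Real.exp_nat_mul]
      congr 1
      push_cast
      ring
    have hmono : Real.exp (-(4 * t)) ≤ Real.exp (-(4 / 3 : ℝ)) :=
      Real.exp_le_exp.mpr (by linarith)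
    have hinv : Real.exp (-(4 / 3 : ℝ)) = (Real.exp (4 / 3 : ℝ))⁻¹ := Real.exp_neg _
    have hfin : Real.exp (-(4 / 3 : ℝ)) ≤ 0.27 := by
      rw [hinv, inv_le_iff_one_le_mul₀ (by positivity)]
      nlinarith
    calc r = Real.exp (-(4 * t)) := hqr
      _ ≤ Real.exp (-(4 / 3 : ℝ)) := hmono
      _ ≤ 0.27 := hfin
  have hr1 : r < 1 := by linarith
  -- peel off first term
  have hT : Summable (fun k : ℕ => ((k : ℝ) + 1) * Real.exp (-((k : ℝ) + 1) ^ 2 * t)) :=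
    summable_T ht
  have hpeel : T t = Real.exp (-t) +
      ∑' k : ℕ, ((k : ℝ) + 2) * Real.exp (-((k : ℝ) + 2) ^ 2 * t) := by
    unfold T
    rw [Summable.tsum_eq_zero_add hT]
    norm_num
    congr 1
    funext k
    push_cast
    ring_nf
  -- tail bound by geometric-type series
  have hterm : ∀ k : ℕ, ((k : ℝ) + 2) * Real.exp (-((k : ℝ) + 2) ^ 2 * t) ≤
      ((k : ℝ) + 2) * r ^ (k + 1) := by
    intro k
    have hee : Real.exp (-((k : ℝ) + 2) ^ 2 * t) = q ^ ((k + 2) ^ 2) := by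
      rw [hq, ← Real.exp_nat_mul]
      congr 1
      push_cast
      ring
    have hre : r ^ (k + 1) = q ^ (4 * (k + 1)) := by
      rw [hr, ← pow_mul]
    rw [hee, hre]
    have hle : q ^ ((k + 2) ^ 2) ≤ q ^ (4 * (k + 1)) :=
      pow_le_pow_of_le_one hq0.le hq1.le (by nlinarith)
    have hpos : (0:ℝ) ≤ (k : ℝ) + 2 := by positivity
    exact mul_le_mul_of_nonneg_left hle hpos
  have hsum_r : Summable (fun k : ℕ => ((k : ℝ) + 2) * r ^ (k + 1)) := by
    have h2 : Summable (fun k : ℕ => (((k : ℝ) + 1) + 1) * (r ^ k * r)) :=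
      ((summable_aux hr0 hr1).add (summable_geometric_of_lt_one hr0.le hr1)).mul_right r
        |>.congr (fun k => by ring)
    exact h2.congr (fun k => by push_cast; ring)
  have hsum_tail : Summable (fun k : ℕ => ((k : ℝ) + 2) * Real.exp (-((k : ℝ) + 2) ^ 2 * t)) := by
    apply Summable.of_nonneg_of_le (fun k => by positivity) hterm hsum_r
  have htail : (∑' k : ℕ, ((k : ℝ) + 2) * Real.exp (-((k : ℝ) + 2) ^ 2 * t)) ≤
      ∑' k : ℕ, ((k : ℝ) + 2) * r ^ (k + 1) :=
    Summable.tsum_le_tsum hterm hsum_tail hsum_r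
  -- compute the geometric-type sum
  have hnr : ‖r‖ < 1 := by rw [Real.norm_eq_abs, abs_of_pos hr0]; exact hr1
  have hval1 : ∑' k : ℕ, (k : ℝ) * r ^ k = r / (1 - r) ^ 2 :=
    tsum_coe_mul_geometric_of_norm_lt_one hnr
  have hsum_nat : Summable (fun k : ℕ => (k : ℝ) * r ^ k) := by
    simpa using summable_pow_mul_geometric_of_norm_lt_one 1 (r := r) hnr
  have hshift : ∑' k : ℕ, ((k : ℝ) + 1) * r ^ (k + 1) = r / (1 - r) ^ 2 := by
    rw [← hval1, Summable.tsum_eq_zero_add hsum_nat]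
    push_cast
    norm_num
  have hgeo : ∑' k : ℕ, r ^ (k + 1) = r * (1 - r)⁻¹ := by
    have := tsum_geometric_of_lt_one hr0.le hr1
    calc ∑' k : ℕ, r ^ (k + 1) = ∑' k : ℕ, r * r ^ k := by
          congr 1; funext k; ring
      _ = r * ∑' k : ℕ, r ^ k := tsum_mul_left
      _ = r * (1 - r)⁻¹ := by rw [this]
  have hsum_shift : Summable (fun k : ℕ => ((k : ℝ) + 1) * r ^ (k + 1)) :=
    ((summable_aux hr0 hr1).mul_right r).congr (fun k => by ring)
  have hsum_geo : Summable (fun k : ℕ => r ^ (k + 1)) :=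
    ((summable_geometric_of_lt_one hr0.le hr1).mul_left r).congr (fun k => by ring)
  have hsplit : ∑' k : ℕ, ((k : ℝ) + 2) * r ^ (k + 1) =
      r / (1 - r) ^ 2 + r * (1 - r)⁻¹ := by
    rw [← hshift, ← hgeo, ← Summable.tsum_add hsum_shift hsum_geo]
    congr 1
    funext k
    ring
  -- final numeric estimate
  have h1r : (0:ℝ) < 1 - r := by linarith
  have hquad : r / (1 - r) ^ 2 + r * (1 - r)⁻¹ ≤ 4 * r := by
    have heq : r / (1 - r) ^ 2 + r * (1 - r)⁻¹ = (r + r * (1 - r)) / (1 - r) ^ 2 := by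
      field_simp
    rw [heq, div_le_iff₀ (by positivity)]
    nlinarith [mul_nonneg hr0.le (show (0:ℝ) ≤ 2 - 7 * r by linarith),
      pow_nonneg hr0.le 3]
  have hfour : 4 * r ≤ q / (2 * t) := by
    have hq3 : q ^ 3 = Real.exp (-(3 * t)) := by
      rw [hq, ← Real.exp_nat_mul]
      congr 1
      push_cast
      ring
    have hexp3 : 8 * t ≤ Real.exp (3 * t) := by
      have h1 : 3 * t ≤ Real.exp (3 * t - 1) := by
        have := Real.add_one_le_exp (3 * t - 1)
        linarith
      have h2 : Real.exp (3 * t) = Real.exp (3 * t - 1) * Real.exp 1 := by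
        rw [← Real.exp_add]
        ring_nf
      have he1 : (2.7182818 : ℝ) < Real.exp 1 :=
        lt_of_lt_of_le (by norm_num) Real.exp_one_gt_d9.le
      have h3 : 3 * t * 2.7182818 ≤ Real.exp (3 * t - 1) * Real.exp 1 :=
        mul_le_mul h1 he1.le (by norm_num) (Real.exp_pos _).le
      rw [h2]
      nlinarith
    have h8 : 8 * t * Real.exp (-(3 * t)) ≤ 1 := by
      rw [Real.exp_neg, ← div_eq_mul_inv, div_le_one (Real.exp_pos _)]
      exact hexp3
    rw [le_div_iff₀ (by positivity)]
    have hcomm : 4 * r * (2 * t) = q * (8 * t * q ^ 3) := by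
      rw [hr]
      ring
    rw [hcomm, hq3]
    nlinarith [Real.exp_pos (-(3 * t)), hq0.le, h8]
  have hfinal : Real.exp (-t) + 4 * r ≤ (1 + 1 / (2 * t)) * Real.exp (-t) := by
    have : (1 + 1 / (2 * t)) * Real.exp (-t) = Real.exp (-t) + q / (2 * t) := by
      rw [← hq]
      field_simp
    rw [this]
    linarith
  calc T t = Real.exp (-t) + ∑' k : ℕ, ((k : ℝ) + 2) * Real.exp (-((k : ℝ) + 2) ^ 2 * t) := hpeel
    _ ≤ Real.exp (-t) + ∑' k : ℕ, ((k : ℝ) + 2) * r ^ (k + 1) := by linarith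
    _ = Real.exp (-t) + (r / (1 - r) ^ 2 + r * (1 - r)⁻¹) := by rw [hsplit]
    _ ≤ Real.exp (-t) + 4 * r := by linarith
    _ ≤ (1 + 1 / (2 * t)) * Real.exp (-t) := hfinal

lemma T_le {t : ℝ} (ht : 0 < t) : T t ≤ (1 + 1 / (2 * t)) * Real.exp (-t) := by
  rcases le_total t (1 / 3) with h | h
  · exact T_le_small ht h
  · exact T_le_large ht h

lemma cos_diff_le (u v : ℝ) : |Real.cos u - Real.cos v| ≤ |u - v| := by
  rw [Real.cos_sub_cos, abs_mul, abs_mul]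
  have h1 : |Real.sin ((u + v) / 2)| ≤ 1 := Real.abs_sin_le_one _
  have h2 : |Real.sin ((u - v) / 2)| ≤ |(u - v) / 2| := Real.abs_sin_le_abs
  have h3 : |(-2 : ℝ)| = 2 := by norm_num
  calc |(-2 : ℝ)| * |Real.sin ((u + v) / 2)| * |Real.sin ((u - v) / 2)|
      ≤ 2 * 1 * |(u - v) / 2| := by
        rw [h3]
        apply mul_le_mul (by nlinarith [abs_nonneg (Real.sin ((u + v) / 2))]) h2
          (abs_nonneg _) (by norm_num)
    _ = |u - v| := by
        rw [abs_div, abs_two]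
        ring

end CHKaux

set_option maxHeartbeats 4000000
/-- Lipschitz estimate for the circle heat kernel: for every `t > 0` and all `x, y, y' ∈ ℝ`,
`|p(t, y − x) − p(t, y' − x)| ≤ (1/π)·(1 + 1/(2t))·e^{-t}·|y − y'|`. -/
theorem circleHeatKernel_lipschitz (t x y y' : ℝ) (ht : 0 < t) :
    |circleHeatKernel t (y - x) - circleHeatKernel t (y' - x)| ≤
      (1 / π) * (1 + 1 / (2 * t)) * Real.exp (-t) * |y - y'| := by
  have hπ : (0:ℝ) < π := Real.pi_pos
  set A := y - x with hA
  set B := y' - x with hB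
  have hT := CHKaux.summable_T ht
  have habs : ∀ θ : ℝ, Summable (fun k : ℕ =>
      Real.exp (-((k : ℝ) + 1) ^ 2 * t) * Real.cos (((k : ℝ) + 1) * θ)) := by
    intro θ
    apply Summable.of_abs
    apply Summable.of_nonneg_of_le (fun k => abs_nonneg _) _ hT
    intro k
    rw [abs_mul, abs_of_pos (Real.exp_pos _)]
    have h2 : |Real.cos (((k : ℝ) + 1) * θ)| ≤ 1 := Real.abs_cos_le_one _
    have h3 : (0:ℝ) < Real.exp (-((k : ℝ) + 1) ^ 2 * t) := Real.exp_pos _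
    nlinarith [h3.le]
  have hbound : ∀ k : ℕ,
      |Real.exp (-((k : ℝ) + 1) ^ 2 * t) *
        (Real.cos (((k : ℝ) + 1) * A) - Real.cos (((k : ℝ) + 1) * B))| ≤
      ((k : ℝ) + 1) * Real.exp (-((k : ℝ) + 1) ^ 2 * t) * |y - y'| := by
    intro k
    rw [abs_mul, abs_of_pos (Real.exp_pos _)]
    have h2 := CHKaux.cos_diff_le (((k : ℝ) + 1) * A) (((k : ℝ) + 1) * B)
    have h4 : |((k : ℝ) + 1) * A - ((k : ℝ) + 1) * B| = ((k : ℝ) + 1) * |y - y'| := by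
      have h3 : ((k : ℝ) + 1) * A - ((k : ℝ) + 1) * B = ((k : ℝ) + 1) * (y - y') := by
        rw [hA, hB]; ring
      rw [h3, abs_mul, abs_of_pos (by positivity : (0:ℝ) < (k : ℝ) + 1)]
    have h5 : (0:ℝ) < Real.exp (-((k : ℝ) + 1) ^ 2 * t) := Real.exp_pos _
    calc Real.exp (-((k : ℝ) + 1) ^ 2 * t) *
          |Real.cos (((k : ℝ) + 1) * A) - Real.cos (((k : ℝ) + 1) * B)|
        ≤ Real.exp (-((k : ℝ) + 1) ^ 2 * t) * (((k : ℝ) + 1) * |y - y'|) :=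
          mul_le_mul_of_nonneg_left (h4 ▸ h2) h5.le
      _ = ((k : ℝ) + 1) * Real.exp (-((k : ℝ) + 1) ^ 2 * t) * |y - y'| := by ring
  have hsummabs : Summable (fun k : ℕ =>
      |Real.exp (-((k : ℝ) + 1) ^ 2 * t) *
        (Real.cos (((k : ℝ) + 1) * A) - Real.cos (((k : ℝ) + 1) * B))|) :=
    Summable.of_nonneg_of_le (fun k => abs_nonneg _) hbound (hT.mul_right _)
  have hsub : (∑' k : ℕ, Real.exp (-((k : ℝ) + 1) ^ 2 * t) * Real.cos (((k : ℝ) + 1) * A)) -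
      (∑' k : ℕ, Real.exp (-((k : ℝ) + 1) ^ 2 * t) * Real.cos (((k : ℝ) + 1) * B)) =
      ∑' k : ℕ, Real.exp (-((k : ℝ) + 1) ^ 2 * t) *
        (Real.cos (((k : ℝ) + 1) * A) - Real.cos (((k : ℝ) + 1) * B)) := by
    rw [← Summable.tsum_sub (habs A) (habs B)]
    exact tsum_congr (fun k => by ring)
  have hkernel_diff : circleHeatKernel t A - circleHeatKernel t B =
      (1 / π) * ∑' k : ℕ, Real.exp (-((k : ℝ) + 1) ^ 2 * t) *
        (Real.cos (((k : ℝ) + 1) * A) - Real.cos (((k : ℝ) + 1) * B)) := by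
    unfold circleHeatKernel
    rw [← hsub]
    ring
  rw [hkernel_diff, abs_mul, abs_of_pos (by positivity : (0:ℝ) < 1 / π)]
  have habs_tsum : |∑' k : ℕ, Real.exp (-((k : ℝ) + 1) ^ 2 * t) *
      (Real.cos (((k : ℝ) + 1) * A) - Real.cos (((k : ℝ) + 1) * B))| ≤
      CHKaux.T t * |y - y'| := by
    have step1 : |∑' k : ℕ, Real.exp (-((k : ℝ) + 1) ^ 2 * t) *
        (Real.cos (((k : ℝ) + 1) * A) - Real.cos (((k : ℝ) + 1) * B))| ≤
        ∑' k : ℕ, |Real.exp (-((k : ℝ) + 1) ^ 2 * t) *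
        (Real.cos (((k : ℝ) + 1) * A) - Real.cos (((k : ℝ) + 1) * B))| := by
      have h := norm_tsum_le_tsum_norm (f := fun k : ℕ => Real.exp (-((k : ℝ) + 1) ^ 2 * t) *
        (Real.cos (((k : ℝ) + 1) * A) - Real.cos (((k : ℝ) + 1) * B)))
        (by simp only [Real.norm_eq_abs]; exact hsummabs)
      simp only [Real.norm_eq_abs] at h
      exact h
    have step2 := Summable.tsum_le_tsum hbound hsummabs (hT.mul_right (|y - y'|))
    have step3 : ∑' k : ℕ, ((k : ℝ) + 1) * Real.exp (-((k : ℝ) + 1) ^ 2 * t) * |y - y'| =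
        CHKaux.T t * |y - y'| := tsum_mul_right
    calc |∑' k : ℕ, Real.exp (-((k : ℝ) + 1) ^ 2 * t) *
        (Real.cos (((k : ℝ) + 1) * A) - Real.cos (((k : ℝ) + 1) * B))|
        ≤ ∑' k : ℕ, |Real.exp (-((k : ℝ) + 1) ^ 2 * t) *
          (Real.cos (((k : ℝ) + 1) * A) - Real.cos (((k : ℝ) + 1) * B))| := step1
      _ ≤ ∑' k : ℕ, ((k : ℝ) + 1) * Real.exp (-((k : ℝ) + 1) ^ 2 * t) * |y - y'| := step2
      _ = CHKaux.T t * |y - y'| := step3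
  have hTle := CHKaux.T_le ht
  have hTnonneg : 0 ≤ CHKaux.T t := tsum_nonneg (fun k => by positivity)
  calc (1 / π) * |∑' k : ℕ, Real.exp (-((k : ℝ) + 1) ^ 2 * t) *
      (Real.cos (((k : ℝ) + 1) * A) - Real.cos (((k : ℝ) + 1) * B))|
      ≤ (1 / π) * (CHKaux.T t * |y - y'|) :=
        mul_le_mul_of_nonneg_left habs_tsum (by positivity)
    _ ≤ (1 / π) * ((1 + 1 / (2 * t)) * Real.exp (-t) * |y - y'|) := by
        apply mul_le_mul_of_nonneg_left _ (by positivity : (0:ℝ) ≤ 1 / π)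
        exact mul_le_mul_of_nonneg_right hTle (abs_nonneg _)
    _ = (1 / π) * (1 + 1 / (2 * t)) * Real.exp (-t) * |y - y'| := by ring
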